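/- Let d : ℝ → ℝ satisfy the Leibniz rule d(xy) = x·d(y) + y·d(x) for all x, y ∈ ℝ, and assume that d(sin x) = cos(x)·d(x) holds for all x ∈ ℝ. Then d is additive, i.e., d(x+y) = d(x) + d(y) for all x, y ∈ ℝ, and hence d is a standard derivation. -/

import Mathlib

/-- If `d : ℝ → ℝ` satisfies the Leibniz rule and is a derivation with respect to the sine
function, then `d` is additive, hence a standard derivation. -/
theorem additive_of_leibniz_of_sin
    (d : ℝ → ℝ) (hleib : ∀ x y : ℝ, d (x * y) = x * d y + y * d x)
    (hsin : ∀ x : ℝ, d (Real.sin x) = Real.cos x * d x) :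
    ∀ x y : ℝ, d (x + y) = d x + d y := by
  have hd0 : d 0 = 0 := by have := hleib 0 0; simpa using this
  have hd1 : d 1 = 0 := by have := hleib 1 1; simp at this; linarith
  have hdneg1 : d (-1) = 0 := by
    have := hleib (-1) (-1); simp at this; rw [hd1] at this; linarith
  have hdneg : ∀ x : ℝ, d (-x) = - d x := by
    intro x
    have := hleib (-1) x
    rw [hdneg1] at this
    simpa using this
  have hdpi : d Real.pi = 0 := by
    have := hsin Real.pi
    simp [hd0] at this
    linarith
  -- reflection: if cos a ≠ 0 then d (π - a) = - d a
  have hrefl : ∀ a : ℝ, Real.cos a ≠ 0 → d (Real.pi - a) = - d a := by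
    intro a ha
    have h1 := hsin (Real.pi - a)
    rw [Real.sin_pi_sub, Real.cos_pi_sub, hsin a] at h1
    have : Real.cos a * d (Real.pi - a) = Real.cos a * (- d a) := by ring_nf; linarith
    exact mul_left_cancel₀ ha this
  -- shift: if cos x ≠ 0 then d (x + π) = d x
  have hshift : ∀ x : ℝ, Real.cos x ≠ 0 → d (x + Real.pi) = d x := by
    intro x hx
    have hc : Real.cos (x + Real.pi) ≠ 0 := by
      rw [Real.cos_add_pi]; simpa using hx
    have h := hrefl (x + Real.pi) hc
    have : Real.pi - (x + Real.pi) = -x := by ring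
    rw [this, hdneg] at h
    linarith
  -- key additivity step
  have key : ∀ s t : ℝ, t ≠ 0 → Real.cos (Real.pi * s / t) ≠ 0 →
      d (s + t) = d s + d t := by
    intro s t ht hc
    set x := Real.pi * s / t with hxdef
    have hxt : x * t = Real.pi * s := by rw [hxdef]; field_simp
    have h1 := hleib (x + Real.pi) t
    have h2 := hleib x t
    have h3 := hleib Real.pi s
    have h4 := hleib Real.pi (s + t)
    rw [hshift x hc] at h1
    rw [hxt, h3, hdpi] at h2
    rw [hdpi] at h3 h4
    have he : (x + Real.pi) * t = Real.pi * (s + t) := by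
      have : (x + Real.pi) * t = x * t + Real.pi * t := by ring
      rw [this, hxt]; ring
    rw [he, h4] at h1
    -- h1 : π * d (s+t) + (s+t) * 0 = (x+π) * d t + t * d x
    -- h2 : π * d s + s * 0 = x * d t + t * d x
    have hmul : Real.pi * d (s + t) = Real.pi * (d s + d t) := by
      ring_nf at h1 h2 ⊢; linarith
    exact mul_left_cancel₀ Real.pi_ne_zero hmul
  intro x y
  by_cases hx : x = 0
  · simp [hx, hd0]
  by_cases hy : y = 0
  · simp [hy, hd0]
  by_cases hc : Real.cos (Real.pi * x / y) = 0
  · -- then cos (π * y / x) ≠ 0, use key with roles swapped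
    have hc2 : Real.cos (Real.pi * y / x) ≠ 0 := by
      intro hc2
      obtain ⟨n, hn⟩ := Real.cos_eq_zero_iff.mp hc
      obtain ⟨m, hm⟩ := Real.cos_eq_zero_iff.mp hc2
      have hπ := Real.pi_ne_zero
      have hn2 : x * 2 = (2 * (n : ℝ) + 1) * y := by
        field_simp at hn
        have h' : Real.pi * (x * 2) = Real.pi * ((2 * (n : ℝ) + 1) * y) := by
          ring_nf at hn ⊢; linear_combination Real.pi * hn
        exact mul_left_cancel₀ hπ h'
      have hm2 : y * 2 = (2 * (m : ℝ) + 1) * x := by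
        field_simp at hm
        have h' : Real.pi * (y * 2) = Real.pi * ((2 * (m : ℝ) + 1) * x) := by
          ring_nf at hm ⊢; linear_combination Real.pi * hm
        exact mul_left_cancel₀ hπ h'
      have hxy : x * y ≠ 0 := mul_ne_zero hx hy
      have h4 : (2 * (n : ℝ) + 1) * (2 * (m : ℝ) + 1) = 4 := by
        apply mul_right_cancel₀ hxy
        calc ((2 * (n : ℝ) + 1) * (2 * (m : ℝ) + 1)) * (x * y)
            = ((2 * (n : ℝ) + 1) * y) * ((2 * (m : ℝ) + 1) * x) := by ring
          _ = (x * 2) * (y * 2) := by rw [← hn2, ← hm2]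
          _ = 4 * (x * y) := by ring
      have h4' : (2 * n + 1) * (2 * m + 1) = (4 : ℤ) := by exact_mod_cast h4
      have : Odd ((2 * n + 1) * (2 * m + 1)) :=
        (odd_two_mul_add_one n).mul (odd_two_mul_add_one m)
      rw [h4'] at this
      obtain ⟨k, hk⟩ := this
      omega
    rw [add_comm, add_comm (d x)]
    exact key y x hx hc2
  · exact key x y hy hc
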